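/- arXiv:1511.08826 — 2 statements merged into one kernel-verified Lean document; each statement's English description precedes it below -/
import Mathlib

section
/- Let H be a finite bipartite simple graph with parts A = {a₁, …, a_n} and B = {b₁, …, b_n} such that: H is regular of degree Δ; H has girth at least γ; for every a ∈ A and every b ∈ B there is a walk in H of length at most τ from a to b; and a_i is adjacent to b_i in H for every i ∈ {1, …, n} (so {a_ib_i} is a perfect matching). Define the matching contraction μ(H) to be the simple graph on vertex set {1, …, n} in which distinct i and j are adjacent if and only if a_i is adjacent to b_j in H or a_j is adjacent to b_i in H. Then μ(H) has maximum degree at most 2Δ − 2; twice the girth of μ(H) is at least the girth of H (so μ(H) has girth at least γ/2); μ(H) has n vertices; and between every two distinct vertices of μ(H) there is a walk in μ(H) of length at most τ. -/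
/-- The matching contraction of a bipartite graph `H` whose parts are enumerated as
`a 1, …, a n` and `b 1, …, b n`: vertices `i ≠ j` are adjacent iff `a i` is adjacent to
`b j` in `H` or `a j` is adjacent to `b i` in `H`. -/
def matchingContraction {W : Type*} (H : SimpleGraph W) {n : ℕ} (a b : Fin n → W) :
    SimpleGraph (Fin n) where
  Adj i j := i ≠ j ∧ (H.Adj (a i) (b j) ∨ H.Adj (a j) (b i))
  symm := ⟨by rintro i j ⟨hij, h⟩; exact ⟨hij.symm, h.symm⟩⟩
  loopless := ⟨by rintro i ⟨h, -⟩; exact h rfl⟩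

open SimpleGraph Walk

lemma mc_adj {W : Type*} (H : SimpleGraph W) {n : ℕ} (a b : Fin n → W) (i j : Fin n) :
    (matchingContraction H a b).Adj i j ↔ i ≠ j ∧ (H.Adj (a i) (b j) ∨ H.Adj (a j) (b i)) :=
  Iff.rfl

section aux
variable {V : Type*} {G : SimpleGraph V}

lemma egirth_le_of_cycle {u : V} {w : G.Walk u u} (h : w.IsCycle) :
    G.egirth ≤ w.length := by
  rw [SimpleGraph.egirth]
  exact iInf₂_le_of_le u w (iInf_le_of_le h le_rfl)

lemma path_edge_length_one {u v : V} (h : u ≠ v) :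
    ∀ {p : G.Walk v u}, p.IsPath → s(u, v) ∈ p.edges → p.length = 1 := by
  intro p
  induction p with
  | nil => intro _ he; simp at he
  | cons hadj q ih =>
    intro hp he
    rw [Walk.edges_cons, List.mem_cons] at he
    rcases he with he | he
    · rw [Sym2.eq_iff] at he
      rcases he with ⟨h1, _⟩ | ⟨h1, _⟩
      · exact absurd h1 h
      · subst h1
        have hq := Walk.isPath_iff_eq_nil.mp ((Walk.cons_isPath_iff _ _).mp hp).1
        subst hq; simp
    · have hv := Walk.snd_mem_support_of_mem_edges q he
      exact absurd hv ((Walk.cons_isPath_iff _ _).mp hp).2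

/-- Splitting a walk with a repeated vertex in its support. -/
lemma closed_split [DecidableEq V] {v u : V} (p : G.Walk v u) (hnd : ¬ p.support.Nodup) :
    ∃ (x y : V) (q₁ : G.Walk v x) (hxy : G.Adj x y) (rT : G.Walk y x) (rD : G.Walk x u),
      p.edges = q₁.edges ++ (s(x, y) :: (rT.edges ++ rD.edges)) ∧
      p.length = q₁.length + (1 + (rT.length + rD.length)) := by
  obtain ⟨x, hdup⟩ := List.exists_duplicate_iff_not_nodup.mpr hnd
  have hx2 : 2 ≤ p.support.count x := List.duplicate_iff_two_le_count.mp hdup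
  have hx1 : x ∈ p.support := hdup.mem
  have hspec := p.take_spec hx1
  have hc1 : (p.takeUntil x hx1).support.count x = 1 := p.count_support_takeUntil_eq_one hx1
  have hxt : x ∈ (p.dropUntil x hx1).support.tail := by
    have hsupp := congrArg Walk.support hspec
    rw [Walk.support_append] at hsupp
    rw [← hsupp, List.count_append, hc1] at hx2
    have : 0 < (p.dropUntil x hx1).support.tail.count x := by omega
    exact List.count_pos_iff.mp this
  have hnn : ¬ (p.dropUntil x hx1).Nil := by
    intro hnil
    have h0 : (p.dropUntil x hx1).length = 0 := Walk.nil_iff_length_eq.mp hnil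
    have h1 : (p.dropUntil x hx1).support.length = 1 := by
      rw [Walk.length_support]; omega
    have h2 : (p.dropUntil x hx1).support.tail.length = 0 := by
      rw [List.length_tail]; omega
    rw [List.length_eq_zero_iff] at h2
    rw [h2] at hxt; simp at hxt
  obtain ⟨y, hxy, r, hq2⟩ := Walk.not_nil_iff.mp hnn
  rw [hq2] at hxt
  have hxr : x ∈ r.support := by simpa using hxt
  refine ⟨x, y, p.takeUntil x hx1, hxy, r.takeUntil x hxr, r.dropUntil x hxr, ?_, ?_⟩
  · conv_lhs => rw [← hspec]
    rw [Walk.edges_append, hq2, Walk.edges_cons]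
    congr 2
    conv_lhs => rw [← r.take_spec hxr]
    rw [Walk.edges_append]
  · conv_lhs => rw [← hspec]
    rw [Walk.length_append, hq2, Walk.length_cons]
    have : r.length = (r.takeUntil x hxr).length + (r.dropUntil x hxr).length := by
      conv_lhs => rw [← r.take_spec hxr]
      rw [Walk.length_append]
    omega

lemma egirth_le_of_closed_walk [DecidableEq V] :
    ∀ (L : ℕ) {u : V} (w : G.Walk u u), w.length ≤ L →
      (∃ e, w.edges.count e = 1) → G.egirth ≤ w.length := by
  intro L
  induction L with
  | zero =>
    rintro u w hL ⟨e, he⟩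
    have h0 : w.edges = [] := List.length_eq_zero_iff.mp (by rw [Walk.length_edges]; omega)
    rw [h0] at he; simp at he
  | succ L ih =>
    rintro u w hL ⟨e, he⟩
    cases w with
    | nil => simp at he
    | @cons _ v _ hadj p =>
      by_cases hnd : p.support.Nodup
      · have hp : p.IsPath := (Walk.isPath_def p).mpr hnd
        by_cases hev : s(u, v) ∈ p.edges
        · have h1 := path_edge_length_one hadj.ne hp hev
          obtain ⟨f, hf⟩ := List.length_eq_one_iff.mp
            (by rw [Walk.length_edges, h1] : p.edges.length = 1)
          have hfe : f = s(u, v) := by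
            rw [hf] at hev; exact (List.mem_singleton.mp hev).symm
          rw [Walk.edges_cons, hf, hfe] at he
          rcases eq_or_ne e s(u, v) with h | h
          · subst h; simp [List.count_cons] at he
          · simp [List.count_cons, h, h.symm] at he
        · have hcyc : (Walk.cons hadj p).IsCycle :=
            (Walk.cons_isCycle_iff p hadj).mpr ⟨hp, hev⟩
          exact egirth_le_of_cycle hcyc
      · obtain ⟨x, y, q₁, hxy, rT, rD, hedges, hlen⟩ := closed_split p hnd
        have hcount : (Walk.cons hadj (q₁.append rD)).edges.count e
            + (Walk.cons hxy rT).edges.count e = 1 := by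
          rw [Walk.edges_cons, hedges] at he
          simp only [Walk.edges_cons, Walk.edges_append, List.count_append,
            List.count_cons] at he ⊢
          split_ifs at he ⊢ <;> omega
        have hlen1 : (Walk.cons hadj (q₁.append rD)).length ≤ L := by
          simp only [Walk.length_cons, Walk.length_append] at hL ⊢
          omega
        have hlen2 : (Walk.cons hxy rT).length ≤ L := by
          simp only [Walk.length_cons] at hL ⊢
          omega
        rcases Nat.eq_zero_or_pos ((Walk.cons hadj (q₁.append rD)).edges.count e) with h0 | h0
        · have h1 : (Walk.cons hxy rT).edges.count e = 1 := by omega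
          calc G.egirth ≤ ((Walk.cons hxy rT).length : ℕ∞) :=
                ih (Walk.cons hxy rT) hlen2 ⟨e, h1⟩
            _ ≤ ((Walk.cons hadj p).length : ℕ∞) := by
                have : (Walk.cons hxy rT).length ≤ (Walk.cons hadj p).length := by
                  simp only [Walk.length_cons]; omega
                exact_mod_cast this
        · have h1 : (Walk.cons hadj (q₁.append rD)).edges.count e = 1 := by omega
          calc G.egirth ≤ ((Walk.cons hadj (q₁.append rD)).length : ℕ∞) :=
                ih (Walk.cons hadj (q₁.append rD)) hlen1 ⟨e, h1⟩
            _ ≤ ((Walk.cons hadj p).length : ℕ∞) := by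
                have : (Walk.cons hadj (q₁.append rD)).length ≤ (Walk.cons hadj p).length := by
                  simp only [Walk.length_cons, Walk.length_append]; omega
                exact_mod_cast this

end aux

open scoped Classical in
/-- Lift a walk of the matching contraction to a walk in `H`. -/
noncomputable def mcLift {W : Type} (H : SimpleGraph W) {n : ℕ} (a b : Fin n → W)
    (hm : ∀ i, H.Adj (a i) (b i)) :
    ∀ {i j : Fin n}, (matchingContraction H a b).Walk i j → H.Walk (a i) (a j)
  | _, _, .nil => .nil
  | i, _, .cons (v := k) h p =>
    if hik : H.Adj (a i) (b k) then
      .cons hik (.cons (hm k).symm (mcLift H a b hm p))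
    else
      .cons (hm i)
        (.cons ((((mc_adj H a b i k).mp h).2.resolve_left hik).symm) (mcLift H a b hm p))

lemma mcLift_length {W : Type} (H : SimpleGraph W) {n : ℕ} (a b : Fin n → W)
    (hm : ∀ i, H.Adj (a i) (b i)) :
    ∀ {i j : Fin n} (p : (matchingContraction H a b).Walk i j),
      (mcLift H a b hm p).length = 2 * p.length
  | _, _, .nil => by simp [mcLift]
  | i, j, .cons (v := k) h p => by
    have := mcLift_length H a b hm p
    simp only [mcLift]
    split_ifs <;> simp [this, Walk.length_cons] <;> omega

lemma mcLift_edges {W : Type} (H : SimpleGraph W) {n : ℕ} (a b : Fin n → W)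
    (ha : Function.Injective a) (hb : Function.Injective b)
    (hab : ∀ u v : Fin n, a u ≠ b v)
    (hm : ∀ i, H.Adj (a i) (b i)) :
    ∀ {i j : Fin n} (p : (matchingContraction H a b).Walk i j) (u v : Fin n),
      s(a u, b v) ∈ (mcLift H a b hm p).edges → u = v ∨ s(u, v) ∈ p.edges
  | _, _, .nil, u, v, he => by simp [mcLift] at he
  | i, j, .cons (v := k) h p, u, v, he => by
    have hpair : ∀ u' v' : Fin n, s(a u, b v) = s(a u', b v') → u = u' ∧ v = v' := by
      intro u' v' hp
      rw [Sym2.eq_iff] at hp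
      rcases hp with ⟨h1, h2⟩ | ⟨h1, h2⟩
      · exact ⟨ha h1, hb h2⟩
      · exact absurd h1 (hab u v')
    simp only [mcLift] at he
    split_ifs at he with hik
    · simp only [Walk.edges_cons, List.mem_cons] at he
      rcases he with he | he | he
      · obtain ⟨rfl, rfl⟩ := hpair i k he
        exact Or.inr (by rw [Walk.edges_cons]; exact List.mem_cons_self)
      · obtain ⟨rfl, rfl⟩ := hpair k k (by rw [he]; exact Sym2.eq_swap)
        exact Or.inl rfl
      · rcases mcLift_edges H a b ha hb hab hm p u v he with h' | h'
        · exact Or.inl h'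
        · exact Or.inr (by rw [Walk.edges_cons]; exact List.mem_cons_of_mem _ h')
    · simp only [Walk.edges_cons, List.mem_cons] at he
      rcases he with he | he | he
      · obtain ⟨rfl, rfl⟩ := hpair i i he
        exact Or.inl rfl
      · obtain ⟨rfl, rfl⟩ := hpair k i (by rw [he]; exact Sym2.eq_swap)
        exact Or.inr (by rw [Walk.edges_cons, Sym2.eq_swap]; exact List.mem_cons_self)
      · rcases mcLift_edges H a b ha hb hab hm p u v he with h' | h'
        · exact Or.inl h'
        · exact Or.inr (by rw [Walk.edges_cons]; exact List.mem_cons_of_mem _ h')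

lemma mcLift_cons_count {W : Type} [DecidableEq W] (H : SimpleGraph W) {n : ℕ}
    (a b : Fin n → W)
    (ha : Function.Injective a) (hb : Function.Injective b)
    (hab : ∀ u v : Fin n, a u ≠ b v)
    (hm : ∀ i, H.Adj (a i) (b i)) {i k j : Fin n}
    (h : (matchingContraction H a b).Adj i k)
    (p : (matchingContraction H a b).Walk k j) (hp : s(i, k) ∉ p.edges) :
    ∃ e, ((mcLift H a b hm (Walk.cons h p)).edges).count e = 1 := by
  have hik' : i ≠ k := ((mc_adj H a b i k).mp h).1
  have hpair : ∀ u v u' v' : Fin n, s(a u, b v) = s(a u', b v') → u = u' ∧ v = v' := by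
    intro u v u' v' hq
    rw [Sym2.eq_iff] at hq
    rcases hq with ⟨h1, h2⟩ | ⟨h1, h2⟩
    · exact ⟨ha h1, hb h2⟩
    · exact absurd h1 (hab u v')
  by_cases hik : H.Adj (a i) (b k)
  · refine ⟨s(a i, b k), ?_⟩
    have h1 : s(a i, b k) ≠ s(b k, a k) := by
      intro hq
      obtain ⟨h2, -⟩ := hpair i k k k (hq.trans Sym2.eq_swap)
      exact hik' h2
    have h2 : s(a i, b k) ∉ (mcLift H a b hm p).edges := by
      intro hq
      rcases mcLift_edges H a b ha hb hab hm p i k hq with h' | h'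
      · exact hik' h'
      · exact hp h'
    simp only [mcLift, dif_pos hik, Walk.edges_cons]
    simp [List.count_cons, h1, List.count_eq_zero_of_not_mem h2]
    exact ⟨fun _ h => hab k k h, fun h => hik' (ha h).symm⟩
  · refine ⟨s(b i, a k), ?_⟩
    have h1 : s(b i, a k) ≠ s(a i, b i) := by
      intro hq
      obtain ⟨h2, -⟩ := hpair k i i i ((Sym2.eq_swap).symm.trans hq)
      exact hik' h2.symm
    have h2 : s(b i, a k) ∉ (mcLift H a b hm p).edges := by
      intro hq
      rw [Sym2.eq_swap] at hq
      rcases mcLift_edges H a b ha hb hab hm p k i hq with h' | h'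
      · exact hik' h'.symm
      · rw [Sym2.eq_swap] at h'; exact hp h'
    simp only [mcLift, dif_neg hik, Walk.edges_cons]
    simp [List.count_cons, h1, List.count_eq_zero_of_not_mem h2]
    exact ⟨fun h _ => hab i i h, fun h => hik' (ha h)⟩

/-- Matching contraction of a good conduit: if `H` is a bipartite graph with parts
`{a 1, …, a n}` and `{b 1, …, b n}`, regular of degree `Δ`, of girth at least `γ`, with a
walk of length at most `τ` between any `a i` and `b j`, and with `a i b i` a perfect
matching, then `μ(H)` has maximum degree at most `2Δ - 2`, twice its girth is at least the
girth of `H`, it has `n` vertices, and any two distinct vertices of `μ(H)` are joined by a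
walk of length at most `τ`. -/
theorem matchingContraction_properties
    (W : Type) [Fintype W] (H : SimpleGraph W) (n Δ τ : ℕ) (γ : ℕ∞)
    (a b : Fin n → W)
    (ha : Function.Injective a) (hb : Function.Injective b)
    (hdisj : Disjoint (Set.range a) (Set.range b))
    (hcover : ∀ w : W, w ∈ Set.range a ∨ w ∈ Set.range b)
    (hbip : ∀ u v : W, H.Adj u v →
      (u ∈ Set.range a ∧ v ∈ Set.range b) ∨ (u ∈ Set.range b ∧ v ∈ Set.range a))
    (hreg : ∀ v : W, {w : W | H.Adj v w}.ncard = Δ)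
    (hgirth : γ ≤ H.egirth)
    (hwalk : ∀ i j : Fin n, ∃ w : H.Walk (a i) (b j), w.length ≤ τ)
    (hmatch : ∀ i : Fin n, H.Adj (a i) (b i)) :
    (∀ i : Fin n, {j : Fin n | (matchingContraction H a b).Adj i j}.ncard ≤ 2 * Δ - 2) ∧
    H.egirth ≤ 2 * (matchingContraction H a b).egirth ∧
    Fintype.card (Fin n) = n ∧
    (∀ i j : Fin n, i ≠ j →
      ∃ w : (matchingContraction H a b).Walk i j, w.length ≤ τ) := by
  classical
  have hab : ∀ u v : Fin n, a u ≠ b v := by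
    intro u v h
    exact Set.disjoint_left.mp hdisj ⟨u, rfl⟩ ⟨v, h.symm⟩
  refine ⟨?_, ?_, Fintype.card_fin n, ?_⟩
  · -- degree bound
    intro i
    have hΔ : 1 ≤ Δ := by
      have h0 : 0 < {w : W | H.Adj (a i) w}.ncard :=
        (Set.ncard_pos (Set.toFinite _)).mpr ⟨b i, hmatch i⟩
      rw [hreg] at h0; omega
    have hsub : {j : Fin n | (matchingContraction H a b).Adj i j} ⊆
        ({j : Fin n | H.Adj (a i) (b j)} \ {i}) ∪ ({j : Fin n | H.Adj (a j) (b i)} \ {i}) := by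
      intro j hj
      rw [Set.mem_setOf_eq, mc_adj] at hj
      obtain ⟨hne, h' | h'⟩ := hj
      · exact Or.inl ⟨h', fun hh => hne (Set.mem_singleton_iff.mp hh).symm⟩
      · exact Or.inr ⟨h', fun hh => hne (Set.mem_singleton_iff.mp hh).symm⟩
    have h1 : {j : Fin n | H.Adj (a i) (b j)}.ncard ≤ Δ := by
      rw [← hreg (a i)]
      exact Set.ncard_le_ncard_of_injOn b (fun j hj => hj)
        (fun x _ y _ h => hb h) (Set.toFinite _)
    have h2 : {j : Fin n | H.Adj (a j) (b i)}.ncard ≤ Δ := by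
      rw [← hreg (b i)]
      exact Set.ncard_le_ncard_of_injOn a (fun j hj => hj.symm)
        (fun x _ y _ h => ha h) (Set.toFinite _)
    have hi1 : i ∈ {j : Fin n | H.Adj (a i) (b j)} := hmatch i
    have hi2 : i ∈ {j : Fin n | H.Adj (a j) (b i)} := hmatch i
    have hd1 := Set.ncard_diff_singleton_of_mem hi1
    have hd2 := Set.ncard_diff_singleton_of_mem hi2
    calc {j : Fin n | (matchingContraction H a b).Adj i j}.ncard
        ≤ (({j : Fin n | H.Adj (a i) (b j)} \ {i}) ∪
            ({j : Fin n | H.Adj (a j) (b i)} \ {i})).ncard :=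
          Set.ncard_le_ncard hsub (Set.toFinite _)
      _ ≤ ({j : Fin n | H.Adj (a i) (b j)} \ {i}).ncard
            + ({j : Fin n | H.Adj (a j) (b i)} \ {i}).ncard := Set.ncard_union_le _ _
      _ ≤ 2 * Δ - 2 := by rw [hd1, hd2]; omega
  · -- girth bound
    rcases eq_or_ne (matchingContraction H a b).egirth ⊤ with htop | hne
    · rw [htop]
      have : (2 : ℕ∞) * ⊤ = ⊤ := by
        simp
      rw [this]; exact le_top
    · have hcy : ¬ (matchingContraction H a b).IsAcyclic := by
        rw [← SimpleGraph.egirth_eq_top] at *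
        exact hne
      obtain ⟨i, c, hcyc, hg⟩ := SimpleGraph.exists_egirth_eq_length.mpr hcy
      cases c with
      | nil => exact absurd rfl hcyc.ne_nil
      | @cons _ k _ h p =>
        have hip := (Walk.cons_isCycle_iff p h).mp hcyc
        obtain ⟨e, hcnt⟩ := mcLift_cons_count H a b ha hb hab hmatch h p hip.2
        have hlift := mcLift_length H a b hmatch (Walk.cons h p)
        have hle : H.egirth ≤ ((mcLift H a b hmatch (Walk.cons h p)).length : ℕ∞) :=
          egirth_le_of_closed_walk _ (mcLift H a b hmatch (Walk.cons h p)) le_rfl ⟨e, hcnt⟩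
        rw [hg]
        calc H.egirth ≤ ((mcLift H a b hmatch (Walk.cons h p)).length : ℕ∞) := hle
          _ = ((2 * (Walk.cons h p).length : ℕ) : ℕ∞) := by rw [hlift]
          _ = 2 * ((Walk.cons h p).length : ℕ∞) := by push_cast; ring
  · -- short walks
    have key : ∀ (x y : W) (w : H.Walk x y), ∀ i j : Fin n,
        (a i = x ∨ b i = x) → (a j = y ∨ b j = y) →
        ∃ q : (matchingContraction H a b).Walk i j, q.length ≤ w.length := by
      intro x y w
      induction w with
      | nil =>
        intro i j hi hj
        have hij : i = j := by
          rcases hi with h1 | h1 <;> rcases hj with h2 | h2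
          · exact ha (h1.trans h2.symm)
          · exact absurd (h1.trans h2.symm) (hab i j)
          · exact absurd (h2.trans h1.symm) (hab j i)
          · exact hb (h1.trans h2.symm)
        subst hij
        exact ⟨Walk.nil, by simp⟩
      | @cons x z y hadj w ih =>
        intro i j hi hj
        rcases hbip x z hadj with ⟨⟨i', hx⟩, ⟨k, hz⟩⟩ | ⟨⟨k', hx⟩, ⟨k, hz⟩⟩
        · have hix : a i = x := by
            rcases hi with h1 | h1
            · exact h1
            · exact absurd (hx.trans h1.symm) (hab i' i)
          obtain ⟨q', hq'⟩ := ih k j (Or.inr hz) hj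
          have hadj' : H.Adj (a i) (b k) := by rw [hix, hz]; exact hadj
          rcases eq_or_ne i k with rfl | hik
          · exact ⟨q', hq'.trans (by simp)⟩
          · exact ⟨Walk.cons ((mc_adj H a b i k).mpr ⟨hik, Or.inl hadj'⟩) q',
              by simp only [Walk.length_cons]; omega⟩
        · have hix : b i = x := by
            rcases hi with h1 | h1
            · exact absurd (h1.trans hx.symm) (hab i k')
            · exact h1
          obtain ⟨q', hq'⟩ := ih k j (Or.inl hz) hj
          have hadj' : H.Adj (a k) (b i) := by rw [hix, hz]; exact hadj.symm
          rcases eq_or_ne i k with rfl | hik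
          · exact ⟨q', hq'.trans (by simp)⟩
          · exact ⟨Walk.cons ((mc_adj H a b i k).mpr ⟨hik, Or.inr hadj'⟩) q',
              by simp only [Walk.length_cons]; omega⟩
    intro i j hij
    obtain ⟨w, hw⟩ := hwalk i j
    obtain ⟨q, hq⟩ := key (a i) (b j) w i j (Or.inl rfl) (Or.inr rfl)
    exact ⟨q, hq.trans hw⟩
end

section
/- For every real ε with 0 < ε < 1 there exists an integer d₀ such that for every integer d ≥ d₀ there is a finite simple graph G of maximum degree at most d and girth at least 4 with χ(G³) ≥ (1 − ε)·d³/8. -/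
/-- The `t`-th power of a simple graph `G`: two distinct vertices are adjacent
iff they are joined in `G` by a walk of length at most `t`. -/
def SimpleGraph.power {V : Type*} (G : SimpleGraph V) (t : ℕ) : SimpleGraph V where
  Adj u v := u ≠ v ∧ ∃ w : G.Walk u v, w.length ≤ t
  symm := ⟨by
    rintro u v ⟨huv, w, hw⟩
    exact ⟨huv.symm, w.reverse, by simpa using hw⟩⟩
  loopless := ⟨by rintro u ⟨h, -⟩; exact h rfl⟩

namespace CubeAux
abbrev A (k : ℕ) := Fin (k+1)
abbrev Word (k : ℕ) := {t : A k × A k × A k // t.1 ≠ t.2.1 ∧ t.2.1 ≠ t.2.2}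
abbrev Hub (k : ℕ) := Fin 6 × A k × A k
abbrev Vtx (k : ℕ) := Word k ⊕ Hub k
variable {k : ℕ}
def fwd (x y : Word k) : Prop :=
  y.1.1 = x.1.2.1 ∧ y.1.2.1 = x.1.2.2 ∧ y.1.2.2 ≠ x.1.1
def memb (x : Word k) (h : Hub k) : Prop :=
  (h.1.val < 2 ∧ h.2.1 = x.1.1 ∧ h.2.2 = x.1.2.1) ∨
  (2 ≤ h.1.val ∧ h.2.1 = x.1.2.1 ∧ h.2.2 = x.1.2.2)
def hadj (g h : Hub k) : Prop :=
  (g.1.val = 0 ∧ h.1.val = 1 ∧ g.2.1 = h.2.1 ∧ g.2.2 ≠ h.2.2) ∨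
  (g.1.val = 2 ∧ h.1.val = 3 ∧ g.2.1 = h.2.1 ∧ g.2.2 ≠ h.2.2) ∨
  (g.1.val = 4 ∧ h.1.val = 5 ∧ g.2.2 = h.2.2 ∧ g.2.1 ≠ h.2.1)

lemma word_tri (x y z : Word k) (h1 : fwd x y ∨ fwd y x) (h2 : fwd y z ∨ fwd z y)
    (h3 : fwd x z ∨ fwd z x) : False := by
  obtain ⟨⟨a, b, c⟩, hab, hbc⟩ := x
  obtain ⟨⟨a', b', c'⟩, hab', hbc'⟩ := y
  obtain ⟨⟨a'', b'', c''⟩, hab'', hbc''⟩ := z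
  simp only [fwd] at h1 h2 h3 hab hbc hab' hbc' hab'' hbc''
  rcases h1 with ⟨e1, e2, e3⟩ | ⟨e1, e2, e3⟩ <;>
    rcases h2 with ⟨f1, f2, f3⟩ | ⟨f1, f2, f3⟩ <;>
      rcases h3 with ⟨g1, g2, g3⟩ | ⟨g1, g2, g3⟩ <;>
        simp_all

lemma memb_memb_word (x y : Word k) (h : Hub k) (hx : memb x h) (hy : memb y h)
    (ha : fwd x y ∨ fwd y x) : False := by
  obtain ⟨⟨a, b, c⟩, hab, hbc⟩ := x
  obtain ⟨⟨a', b', c'⟩, hab', hbc'⟩ := y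
  obtain ⟨f, i, j⟩ := h
  simp only [fwd, memb] at *
  rcases hx with ⟨u1, u2, u3⟩ | ⟨u1, u2, u3⟩ <;> rcases hy with ⟨v1, v2, v3⟩ | ⟨v1, v2, v3⟩ <;>
    rcases ha with ⟨e1, e2, e3⟩ | ⟨e1, e2, e3⟩ <;> first | omega | simp_all

lemma word_hub_hub (x : Word k) (g h : Hub k) (hg : memb x g) (hh : memb x h)
    (hgh : hadj g h ∨ hadj h g) : False := by
  obtain ⟨⟨a, b, c⟩, hab, hbc⟩ := x
  obtain ⟨f, i, j⟩ := g
  obtain ⟨f', i', j'⟩ := h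
  simp only [memb, hadj] at *
  rcases hg with ⟨u1, u2, u3⟩ | ⟨u1, u2, u3⟩ <;> rcases hh with ⟨v1, v2, v3⟩ | ⟨v1, v2, v3⟩ <;>
    rcases hgh with ((⟨e1, e2, e3, e4⟩ | ⟨e1, e2, e3, e4⟩ | ⟨e1, e2, e3, e4⟩) |
      (⟨e1, e2, e3, e4⟩ | ⟨e1, e2, e3, e4⟩ | ⟨e1, e2, e3, e4⟩)) <;> first | omega | simp_all

lemma hub_tri (f g h : Hub k) (h1 : hadj f g ∨ hadj g f) (h2 : hadj g h ∨ hadj h g)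
    (h3 : hadj f h ∨ hadj h f) : False := by
  obtain ⟨p, _, _⟩ := f
  obtain ⟨q, _, _⟩ := g
  obtain ⟨r, _, _⟩ := h
  simp only [hadj] at h1 h2 h3
  rcases h1 with ((⟨e1, e2, _⟩ | ⟨e1, e2, _⟩ | ⟨e1, e2, _⟩) | (⟨e1, e2, _⟩ | ⟨e1, e2, _⟩ | ⟨e1, e2, _⟩)) <;>
    rcases h2 with ((⟨f1, f2, _⟩ | ⟨f1, f2, _⟩ | ⟨f1, f2, _⟩) | (⟨f1, f2, _⟩ | ⟨f1, f2, _⟩ | ⟨f1, f2, _⟩)) <;>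
      rcases h3 with ((⟨g1, g2, _⟩ | ⟨g1, g2, _⟩ | ⟨g1, g2, _⟩) | (⟨g1, g2, _⟩ | ⟨g1, g2, _⟩ | ⟨g1, g2, _⟩)) <;>
        omega

def adj : Vtx k → Vtx k → Prop
  | .inl x, .inl y => fwd x y ∨ fwd y x
  | .inl x, .inr h => memb x h
  | .inr h, .inl x => memb x h
  | .inr g, .inr h => hadj g h ∨ hadj h g

def G (k : ℕ) : SimpleGraph (Vtx k) where
  Adj := adj
  symm := ⟨by
    rintro (x | g) (y | h) hA
    · exact hA.symm
    · exact hA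
    · exact hA
    · exact hA.symm⟩
  loopless := ⟨by
    rintro (x | g) hA
    · rcases hA with ⟨h1, h2, h3⟩ | ⟨h1, h2, h3⟩ <;> exact x.2.1 h1
    · rcases hA with (⟨h1, h2, _⟩ | ⟨h1, h2, _⟩ | ⟨h1, h2, _⟩) |
        (⟨h1, h2, _⟩ | ⟨h1, h2, _⟩ | ⟨h1, h2, _⟩) <;> omega⟩

lemma no_triangle (u v w : Vtx k) (huv : (G k).Adj u v) (hvw : (G k).Adj v w)
    (huw : (G k).Adj u w) : False := by
  rcases u with x | g <;> rcases v with y | h <;> rcases w with z | h'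
  · exact word_tri x y z huv hvw huw
  · exact memb_memb_word x y h' huw hvw huv
  · exact memb_memb_word x z h huv hvw huw
  · exact word_hub_hub x h h' huv huw hvw
  · exact memb_memb_word y z g huv huw hvw
  · exact word_hub_hub y g h' huv hvw huw
  · exact word_hub_hub z g h huw hvw huv
  · exact hub_tri g h h' huv hvw huw

lemma girth4 : 4 ≤ (G k).egirth := by
  by_contra hlt
  push_neg at hlt
  have hne : (G k).egirth ≠ ⊤ := by
    intro h
    rw [h] at hlt
    exact (not_top_lt hlt)
  have hnac : ¬ (G k).IsAcyclic := fun hac => hne (SimpleGraph.egirth_eq_top.mpr hac)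
  obtain ⟨a, w, hcyc, hlen⟩ := SimpleGraph.exists_egirth_eq_length.mpr hnac
  have h3 : (3 : ℕ∞) ≤ (G k).egirth := SimpleGraph.three_le_egirth
  rw [hlen] at hlt h3
  have hlt' : w.length < 4 := by exact_mod_cast hlt
  have h3' : 3 ≤ w.length := by exact_mod_cast h3
  have hlen3 : w.length = 3 := by omega
  clear hlt h3 hlen hcyc
  cases w with
  | nil => simp at hlen3
  | cons h1 p =>
    cases p with
    | nil => simp at hlen3
    | cons h2 q =>
      cases q with
      | nil => simp at hlen3
      | cons h3 r =>
        cases r with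
        | cons h4 s => simp only [SimpleGraph.Walk.length_cons] at hlen3; omega
        | nil => exact no_triangle _ _ _ h1 h2 h3.symm

lemma adj_wh {x : Word k} {h : Hub k} (hm : memb x h) : (G k).Adj (Sum.inl x) (Sum.inr h) := hm
lemma adj_hw {x : Word k} {h : Hub k} (hm : memb x h) : (G k).Adj (Sum.inr h) (Sum.inl x) := hm
lemma adj_ww {x y : Word k} (h : fwd x y ∨ fwd y x) : (G k).Adj (Sum.inl x) (Sum.inl y) := h
lemma adj_hh {g h : Hub k} (hm : hadj g h) : (G k).Adj (Sum.inr g) (Sum.inr h) := Or.inl hm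

open SimpleGraph.Walk in
lemma words_close (x y : Word k) :
    ∃ w : (G k).Walk (Sum.inl x) (Sum.inl y), w.length ≤ 3 := by
  obtain ⟨⟨a, b, c⟩, hab, hbc⟩ := x
  obtain ⟨⟨a', b', c'⟩, hab', hbc'⟩ := y
  have d2 : (2:ℕ) ≤ ((2 : Fin 6)).val := by decide
  have d3 : (2:ℕ) ≤ ((3 : Fin 6)).val := by decide
  have d4 : (2:ℕ) ≤ ((4 : Fin 6)).val := by decide
  have d5 : (2:ℕ) ≤ ((5 : Fin 6)).val := by decide
  have d0 : ((0 : Fin 6)).val < 2 := by decide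
  have d1 : ((1 : Fin 6)).val < 2 := by decide
  have e2 : ((2 : Fin 6)).val = 2 := by decide
  have e3 : ((3 : Fin 6)).val = 3 := by decide
  have e0 : ((0 : Fin 6)).val = 0 := by decide
  have e1 : ((1 : Fin 6)).val = 1 := by decide
  have e4 : ((4 : Fin 6)).val = 4 := by decide
  have e5 : ((5 : Fin 6)).val = 5 := by decide
  by_cases hb : b = b'
  · subst hb
    by_cases hc : c = c'
    · subst hc
      have hm : memb ⟨(a, b, c), hab, hbc⟩ ((2 : Fin 6), b, c) := Or.inr ⟨d2, rfl, rfl⟩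
      have hm' : memb ⟨(a', b, c), hab', hbc'⟩ ((2 : Fin 6), b, c) := Or.inr ⟨d2, rfl, rfl⟩
      exact ⟨cons (adj_wh hm) (cons (adj_hw hm') nil), by simp⟩
    · have hm : memb ⟨(a, b, c), hab, hbc⟩ ((2 : Fin 6), b, c) := Or.inr ⟨d2, rfl, rfl⟩
      have hm' : memb ⟨(a', b, c'), hab', hbc'⟩ ((3 : Fin 6), b, c') := Or.inr ⟨d3, rfl, rfl⟩
      have hh : hadj ((2 : Fin 6), b, c) ((3 : Fin 6), b, c') := Or.inr (Or.inl ⟨e2, e3, rfl, hc⟩)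
      exact ⟨cons (adj_wh hm) (cons (adj_hh hh) (cons (adj_hw hm') nil)), by simp⟩
  · by_cases ha : a = a'
    · subst ha
      have hm : memb ⟨(a, b, c), hab, hbc⟩ ((0 : Fin 6), a, b) := Or.inl ⟨d0, rfl, rfl⟩
      have hm' : memb ⟨(a, b', c'), hab', hbc'⟩ ((1 : Fin 6), a, b') := Or.inl ⟨d1, rfl, rfl⟩
      have hh : hadj ((0 : Fin 6), a, b) ((1 : Fin 6), a, b') := Or.inl ⟨e0, e1, rfl, hb⟩
      exact ⟨cons (adj_wh hm) (cons (adj_hh hh) (cons (adj_hw hm') nil)), by simp⟩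
    · by_cases hc : c = c'
      · subst hc
        have hm : memb ⟨(a, b, c), hab, hbc⟩ ((4 : Fin 6), b, c) := Or.inr ⟨d4, rfl, rfl⟩
        have hm' : memb ⟨(a', b', c), hab', hbc'⟩ ((5 : Fin 6), b', c) := Or.inr ⟨d5, rfl, rfl⟩
        have hh : hadj ((4 : Fin 6), b, c) ((5 : Fin 6), b', c) := Or.inr (Or.inr ⟨e4, e5, rfl, hb⟩)
        exact ⟨cons (adj_wh hm) (cons (adj_hh hh) (cons (adj_hw hm') nil)), by simp⟩
      · by_cases hca' : c = a'
        · by_cases hac' : a = c'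
          · have hcb' : c ≠ b' := hca' ▸ hab'
            have hb'a : b' ≠ a := fun h => hbc' (h.trans hac')
            have h1 : fwd (⟨(a, b, c), hab, hbc⟩ : Word k) ⟨(b, c, b'), hbc, hcb'⟩ :=
              ⟨rfl, rfl, hb'a⟩
            have h2 : fwd (⟨(b, c, b'), hbc, hcb'⟩ : Word k) ⟨(a', b', c'), hab', hbc'⟩ :=
              ⟨hca'.symm, rfl, hac' ▸ hab⟩
            exact ⟨cons (adj_ww (Or.inl h1)) (cons (adj_ww (Or.inl h2)) nil), by simp⟩
          · have hc'a : c' ≠ a := fun h => hac' h.symm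
            have h1 : fwd (⟨(a', b', c'), hab', hbc'⟩ : Word k) ⟨(b', c', a), hbc', hc'a⟩ :=
              ⟨rfl, rfl, ha⟩
            have h2 : fwd (⟨(b', c', a), hbc', hc'a⟩ : Word k) ⟨(c', a, b), hc'a, hab⟩ :=
              ⟨rfl, rfl, hb⟩
            have h3 : fwd (⟨(c', a, b), hc'a, hab⟩ : Word k) ⟨(a, b, c), hab, hbc⟩ :=
              ⟨rfl, rfl, hc⟩
            exact ⟨(cons (adj_ww (Or.inl h1)) (cons (adj_ww (Or.inl h2))
              (cons (adj_ww (Or.inl h3)) nil))).reverse, by simp⟩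
        · have h1 : fwd (⟨(a, b, c), hab, hbc⟩ : Word k) ⟨(b, c, a'), hbc, hca'⟩ :=
            ⟨rfl, rfl, Ne.symm ha⟩
          have h2 : fwd (⟨(b, c, a'), hbc, hca'⟩ : Word k) ⟨(c, a', b'), hca', hab'⟩ :=
            ⟨rfl, rfl, Ne.symm hb⟩
          have h3 : fwd (⟨(c, a', b'), hca', hab'⟩ : Word k) ⟨(a', b', c'), hab', hbc'⟩ :=
            ⟨rfl, rfl, Ne.symm hc⟩
          exact ⟨cons (adj_ww (Or.inl h1)) (cons (adj_ww (Or.inl h2))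
            (cons (adj_ww (Or.inl h3)) nil)), by simp⟩

abbrev Code (k : ℕ) := A k ⊕ A k ⊕ Fin 6

def code : Vtx k → Vtx k → Code k
  | .inl x, .inl y =>
      if y.1.1 = x.1.2.1 ∧ y.1.2.1 = x.1.2.2 then .inl y.1.2.2 else .inr (.inl y.1.1)
  | .inl _, .inr h => .inr (.inr h.1)
  | .inr g, .inl y => if g.1.val < 2 then .inl y.1.2.2 else .inl y.1.1
  | .inr g, .inr h => .inr (.inl (if g.1.val ≤ 3 then h.2.2 else h.2.1))

lemma code_injOn (v : Vtx k) : Set.InjOn (code v) {w | (G k).Adj v w} := by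
  rcases v with x | g
  · rintro (y1 | h1) hy1 (y2 | h2) hy2 hc
    · simp only [Set.mem_setOf_eq] at hy1 hy2
      simp only [code] at hc
      by_cases t1 : y1.1.1 = x.1.2.1 ∧ y1.1.2.1 = x.1.2.2 <;>
        by_cases t2 : y2.1.1 = x.1.2.1 ∧ y2.1.2.1 = x.1.2.2 <;>
          simp [t1, t2] at hc
      · exact congrArg Sum.inl (Subtype.ext (Prod.ext (t1.1.trans t2.1.symm)
          (Prod.ext (t1.2.trans t2.2.symm) hc)))
      · have f1 : fwd y1 x := hy1.resolve_left (fun h => t1 ⟨h.1, h.2.1⟩)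
        have f2 : fwd y2 x := hy2.resolve_left (fun h => t2 ⟨h.1, h.2.1⟩)
        exact congrArg Sum.inl (Subtype.ext (Prod.ext hc
          (Prod.ext (f1.1.symm.trans f2.1) (f1.2.1.symm.trans f2.2.1))))
    · simp only [code] at hc
      by_cases t1 : y1.1.1 = x.1.2.1 ∧ y1.1.2.1 = x.1.2.2 <;> simp [t1] at hc
    · simp only [code] at hc
      by_cases t2 : y2.1.1 = x.1.2.1 ∧ y2.1.2.1 = x.1.2.2 <;> simp [t2] at hc
    · simp only [Set.mem_setOf_eq] at hy1 hy2
      simp only [code, Sum.inr.injEq] at hc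
      have hcv : (h1.1.val : ℕ) = h2.1.val := congrArg Fin.val hc
      refine congrArg Sum.inr (Prod.ext hc (Prod.ext ?_ ?_)) <;>
        rcases hy1 with ⟨u1, u2, u3⟩ | ⟨u1, u2, u3⟩ <;>
          rcases hy2 with ⟨v1, v2, v3⟩ | ⟨v1, v2, v3⟩ <;>
            first | omega | exact u2.trans v2.symm | exact u3.trans v3.symm
  · rintro (y1 | h1) hy1 (y2 | h2) hy2 hc
    · simp only [Set.mem_setOf_eq] at hy1 hy2
      simp only [code] at hc
      by_cases t : g.1.val < 2 <;>
        simp only [t, if_true, if_false, reduceIte, Sum.inl.injEq] at hc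
      · rcases hy1 with ⟨u1, u2, u3⟩ | ⟨u1, u2, u3⟩ <;>
          rcases hy2 with ⟨v1, v2, v3⟩ | ⟨v1, v2, v3⟩ <;> [skip; omega; omega; omega]
        exact congrArg Sum.inl (Subtype.ext (Prod.ext (u2.symm.trans v2)
          (Prod.ext (u3.symm.trans v3) hc)))
      · rcases hy1 with ⟨u1, u2, u3⟩ | ⟨u1, u2, u3⟩ <;>
          rcases hy2 with ⟨v1, v2, v3⟩ | ⟨v1, v2, v3⟩ <;> [omega; omega; omega; skip]
        exact congrArg Sum.inl (Subtype.ext (Prod.ext hc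
          (Prod.ext (u2.symm.trans v2) (u3.symm.trans v3))))
    · simp only [code] at hc
      by_cases t : g.1.val < 2 <;> simp [t] at hc
    · simp only [code] at hc
      by_cases t : g.1.val < 2 <;> simp [t] at hc
    · simp only [Set.mem_setOf_eq] at hy1 hy2
      by_cases t : g.1.val ≤ 3 <;>
        simp only [code, t, if_true, if_false, reduceIte, Sum.inr.injEq, Sum.inl.injEq] at hc <;>
        rcases hy1 with (⟨u1, u2, u3, u4⟩ | ⟨u1, u2, u3, u4⟩ | ⟨u1, u2, u3, u4⟩) |
            (⟨u1, u2, u3, u4⟩ | ⟨u1, u2, u3, u4⟩ | ⟨u1, u2, u3, u4⟩) <;>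
        rcases hy2 with (⟨v1, v2, v3, v4⟩ | ⟨v1, v2, v3, v4⟩ | ⟨v1, v2, v3, v4⟩) |
            (⟨v1, v2, v3, v4⟩ | ⟨v1, v2, v3, v4⟩ | ⟨v1, v2, v3, v4⟩) <;>
        first
          | omega
          | exact congrArg Sum.inr (Prod.ext (Fin.ext (by omega))
              (Prod.ext (u3.symm.trans v3) hc))
          | exact congrArg Sum.inr (Prod.ext (Fin.ext (by omega))
              (Prod.ext (u3.trans v3.symm) hc))
          | exact congrArg Sum.inr (Prod.ext (Fin.ext (by omega))
              (Prod.ext hc (u3.symm.trans v3)))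
          | exact congrArg Sum.inr (Prod.ext (Fin.ext (by omega))
              (Prod.ext hc (u3.trans v3.symm)))

lemma deg_le (v : Vtx k) : {w : Vtx k | (G k).Adj v w}.ncard ≤ 2*k+8 := by
  calc {w : Vtx k | (G k).Adj v w}.ncard
      = (code v '' {w : Vtx k | (G k).Adj v w}).ncard := (Set.ncard_image_of_injOn (code_injOn v)).symm
    _ ≤ (Set.univ : Set (Code k)).ncard := Set.ncard_le_ncard (Set.subset_univ _) Set.finite_univ
    _ = Fintype.card (Code k) := by rw [Set.ncard_univ, Nat.card_eq_fintype_card]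
    _ ≤ 2*k+8 := by simp [Fintype.card_sum, Fintype.card_fin]; omega


def psi (k : ℕ) : Fin (k+1) × Fin k × Fin k → Word k := fun p =>
  ⟨(p.1, p.1.succAbove p.2.1, (p.1.succAbove p.2.1).succAbove p.2.2),
    (Fin.succAbove_ne _ _).symm, (Fin.succAbove_ne _ _).symm⟩

lemma psi_inj (k : ℕ) : Function.Injective (psi k) := by
  intro p q h
  have h1 : p.1 = q.1 := congrArg (fun w : Word k => w.1.1) h
  have h2 : p.1.succAbove p.2.1 = q.1.succAbove q.2.1 := congrArg (fun w : Word k => w.1.2.1) h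
  have h3 : (p.1.succAbove p.2.1).succAbove p.2.2 = (q.1.succAbove q.2.1).succAbove q.2.2 :=
    congrArg (fun w : Word k => w.1.2.2) h
  rw [h1] at h2
  have h2' : p.2.1 = q.2.1 := Fin.succAbove_right_injective h2
  rw [h1, h2'] at h3
  have h3' : p.2.2 = q.2.2 := Fin.succAbove_right_injective h3
  exact Prod.ext h1 (Prod.ext h2' h3')

end CubeAux

namespace CubeAux

lemma card_le_chrom (k : ℕ) :
    (((k+1)*k*k : ℕ) : ℕ∞) ≤ ((G k).power 3).chromaticNumber := by
  classical
  have hclique : ((G k).power 3).IsClique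
      (((Finset.univ : Finset (Word k)).image (Sum.inl : Word k → Vtx k) : Finset (Vtx k)) :
        Set (Vtx k)) := by
    intro u hu v hv huv
    simp only [Finset.coe_image, Finset.coe_univ, Set.image_univ, Set.mem_range] at hu hv
    obtain ⟨x, rfl⟩ := hu
    obtain ⟨y, rfl⟩ := hv
    obtain ⟨w, hw⟩ := words_close x y
    exact ⟨huv, w, hw⟩
  have hcard := hclique.card_le_chromaticNumber
  rw [Finset.card_image_of_injective _ Sum.inl_injective, Finset.card_univ] at hcard
  refine le_trans ?_ hcard
  have hle := Fintype.card_le_of_injective _ (psi_inj k)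
  simp only [Fintype.card_prod, Fintype.card_fin] at hle
  have : (k+1)*k*k ≤ Fintype.card (Word k) := le_trans (le_of_eq (by ring)) hle
  exact_mod_cast this

lemma chrom_ne_top (k : ℕ) : ((G k).power 3).chromaticNumber ≠ ⊤ :=
  ne_top_of_le_ne_top (ENat.coe_ne_top _)
    SimpleGraph.chromaticNumber_le_card

lemma main_bound (k : ℕ) : (k+1)*k*k ≤ ((G k).power 3).chromaticNumber.toNat := by
  have h := ENat.toNat_le_toNat (card_le_chrom k) (chrom_ne_top k)
  simpa only [ENat.toNat_coe] using h

end CubeAux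

/-- `χ³₄(d) ≳ d³/8` as `d → ∞`. -/
theorem cube_girth_four_lower (ε : ℝ) (hε0 : 0 < ε) (hε1 : ε < 1) :
    ∃ d₀ : ℕ, ∀ d : ℕ, d₀ ≤ d →
      ∃ (V : Type) (_ : Fintype V) (G : SimpleGraph V),
        (∀ v : V, {w : V | G.Adj v w}.ncard ≤ d) ∧
        4 ≤ G.egirth ∧
        (1 - ε) * (d : ℝ) ^ 3 / 8 ≤ ((G.power 3).chromaticNumber.toNat : ℝ) := by
  refine ⟨max 30 ⌈(27:ℝ)/ε⌉₊, fun d hd => ?_⟩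
  have hd30 : 30 ≤ d := le_trans (le_max_left _ _) hd
  set k := (d - 8)/2 with hk
  refine ⟨CubeAux.Vtx k, inferInstance, CubeAux.G k, ?_, CubeAux.girth4, ?_⟩
  · intro v
    exact le_trans (CubeAux.deg_le v) (by omega)
  · have hcn := CubeAux.main_bound k
    have hcast : (((k+1)*k*k : ℕ) : ℝ) ≤ (((CubeAux.G k).power 3).chromaticNumber.toNat : ℝ) :=
      Nat.cast_le.mpr hcn
    refine le_trans ?_ hcast
    push_cast
    have hkd : (d:ℝ) ≤ 2*(k:ℝ) + 9 := by
      have : d ≤ 2*k+9 := by omega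
      exact_mod_cast this
    have hd30' : (30:ℝ) ≤ (d:ℝ) := by exact_mod_cast hd30
    have hεd : (27:ℝ) ≤ ε * d := by
      have h1 : ((⌈(27:ℝ)/ε⌉₊ : ℕ) : ℝ) ≤ (d:ℝ) := by
        exact_mod_cast le_trans (le_max_right _ _) hd
      have h2 : (27:ℝ)/ε ≤ (⌈(27:ℝ)/ε⌉₊ : ℝ) := Nat.le_ceil _
      calc (27:ℝ) = (27/ε)*ε := by field_simp
        _ ≤ (d:ℝ)*ε := mul_le_mul_of_nonneg_right (h2.trans h1) hε0.le
        _ = ε*d := mul_comm _ _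
    have hk0 : (0:ℝ) ≤ (k:ℝ) := Nat.cast_nonneg _
    have e1 : (1-ε)*(d:ℝ)^3 ≤ ((d:ℝ)-9)^3 := by
      nlinarith [mul_le_mul_of_nonneg_right hεd (sq_nonneg (d:ℝ)), hd30', sq_nonneg ((d:ℝ)-9)]
    have e2 : ((d:ℝ)-9)^3 ≤ (2*(k:ℝ))^3 := by
      apply pow_le_pow_left₀ (by linarith) (by linarith)
    nlinarith [e1, e2, sq_nonneg (k:ℝ), hk0]
end
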